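/- Let n ≥ 1, let γ : ℂ × W × ℂ → W and b : ℂ × W × ℂ → ℝ be ℝ-linear maps with γ₁ = 0 and b₁ = 0 satisfying conditions (C1), (C2), (C3), so that 𝔲 = {X(v) : v ∈ ℂ × W × ℂ} is a real Lie subalgebra of M_{n+2}(ℂ). Then 𝔲 is nilpotent of step at most 3: [𝔲,[𝔲,𝔲]] ⊆ {X(r,0,0) : r ∈ ℂ} and [𝔲,[𝔲,[𝔲,𝔲]]] = 0. -/

import Mathlib

open Matrix

noncomputable section

/-- W = ℂ^{n-1} viewed as a real vector space. -/
abbrev HW (n : ℕ) : Type := Fin (n - 1) → ℂ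

/-- The real inner product ⟨u,v⟩ = Re Σ uᵢ conj(vᵢ). -/
def rInner {n : ℕ} (u v : HW n) : ℝ := (dotProduct u (star v)).re

/-- The symplectic form ω(u,v) = ⟨u, Jv⟩ with J = multiplication by i. -/
def rOmega {n : ℕ} (u v : HW n) : ℝ := rInner u (Complex.I • v)

/-- Extend a vector of ℂ^{n-1} to ℂ^{n+2} supported on the middle indices. -/
def pad (n : ℕ) (u : HW n) : Fin (n + 2) → ℂ := fun j =>
  if h : 0 < (j : ℕ) ∧ (j : ℕ) < n then u ⟨(j : ℕ) - 1, by omega⟩ else 0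

/-- The matrix X(v) ∈ M_{n+2}(ℂ) attached to v = (r,u,s) ∈ ℂ × W × ℂ. -/
def Xmat (n : ℕ) (γ : ℂ × HW n × ℂ →ₗ[ℝ] HW n) (b : ℂ × HW n × ℂ →ₗ[ℝ] ℝ)
    (v : ℂ × HW n × ℂ) : Matrix (Fin (n + 2)) (Fin (n + 2)) ℂ := fun i j =>
  if (i : ℕ) = 0 then
    (if (j : ℕ) = n then Complex.I * ((b v : ℝ) : ℂ)
     else if (j : ℕ) = n + 1 then v.1
     else -((starRingEnd ℂ) (pad n (γ v) j)))
  else if (i : ℕ) = n then (if (j : ℕ) = n + 1 then v.2.2 else 0)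
  else if (i : ℕ) = n + 1 then 0
  else
    (if (j : ℕ) = n then pad n (γ v) i
     else if (j : ℕ) = n + 1 then pad n v.2.1 i
     else 0)

/-- Condition (C1). -/
def Cond1 (n : ℕ) (γ : ℂ × HW n × ℂ →ₗ[ℝ] HW n) : Prop :=
  (∀ u : HW n, γ (0, γ (0, u, 0), 0) = 0) ∧
  (∀ u : HW n, γ (0, Complex.I • γ (0, u, 0), 0) = 0) ∧
  (∀ u u' : HW n, rOmega (γ (0, u, 0)) (γ (0, u', 0)) = 0)

/-- Condition (C2). -/
def Cond2 (n : ℕ) (γ : ℂ × HW n × ℂ →ₗ[ℝ] HW n) : Prop :=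
  ∀ s : ℂ, γ (0, γ (0, 0, Complex.I * s) - Complex.I • γ (0, 0, s), 0) = 0

/-- Condition (C3). -/
def Cond3 (n : ℕ) (γ : ℂ × HW n × ℂ →ₗ[ℝ] HW n)
    (b : ℂ × HW n × ℂ →ₗ[ℝ] ℝ) : Prop :=
  (∀ (u : HW n) (s : ℂ),
    b (0, s • γ (0, u, 0), 0) = 2 * rOmega (γ (0, u, 0)) (γ (0, 0, s))) ∧
  (∀ s : ℂ,
    b (0, γ (0, 0, Complex.I * s) - Complex.I • γ (0, 0, s), 0) =
      2 * rOmega (γ (0, 0, Complex.I * s)) (γ (0, 0, s)))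


/-- Level function for the block grading of indices. -/
def lev (n : ℕ) (i : ℕ) : ℕ :=
  if i = 0 then 0 else if i < n then 1 else if i = n then 2 else 3

lemma lev_le_three (n i : ℕ) : lev n i ≤ 3 := by
  unfold lev; split_ifs <;> omega

lemma lev_zero (n : ℕ) : lev n 0 = 0 := by simp [lev]

lemma lev_pos (n : ℕ) {i : ℕ} (hi : i ≠ 0) : 1 ≤ lev n i := by
  unfold lev; split_ifs <;> omega

lemma lev_le_two (n : ℕ) {i : ℕ} (hi : i ≠ n + 1) (hi2 : i < n + 2) : lev n i ≤ 2 := by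
  unfold lev; split_ifs <;> omega

/-- Matrices supported where the level jumps by at least `k`. -/
def suppMod (n k : ℕ) : Submodule ℝ (Matrix (Fin (n + 2)) (Fin (n + 2)) ℂ) where
  carrier := {m | ∀ i j : Fin (n + 2), lev n (j : ℕ) < lev n (i : ℕ) + k → m i j = 0}
  add_mem' := by
    intro a b ha hb i j h
    simp [Matrix.add_apply, ha i j h, hb i j h]
  zero_mem' := by intro i j h; simp
  smul_mem' := by
    intro c m hm i j h
    simp [Matrix.smul_apply, hm i j h]

lemma mem_suppMod {n k : ℕ} {m : Matrix (Fin (n + 2)) (Fin (n + 2)) ℂ} :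
    m ∈ suppMod n k ↔ ∀ i j : Fin (n + 2), lev n (j : ℕ) < lev n (i : ℕ) + k → m i j = 0 :=
  Iff.rfl

lemma suppMod_mul {n a b : ℕ} {m m' : Matrix (Fin (n + 2)) (Fin (n + 2)) ℂ}
    (hm : m ∈ suppMod n a) (hm' : m' ∈ suppMod n b) : m * m' ∈ suppMod n (a + b) := by
  intro i j h
  rw [Matrix.mul_apply]
  apply Finset.sum_eq_zero
  intro k _
  by_cases hk : lev n (k : ℕ) < lev n (i : ℕ) + a
  · rw [hm i k hk, zero_mul]
  · rw [hm' k j (by omega), mul_zero]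

lemma pad_zero (n : ℕ) (j : Fin (n + 2)) : pad n (0 : HW n) j = 0 := by
  unfold pad; split <;> rfl

lemma Xmat_mem_suppMod (n : ℕ) (hn : 1 ≤ n) (γ : ℂ × HW n × ℂ →ₗ[ℝ] HW n)
    (b : ℂ × HW n × ℂ →ₗ[ℝ] ℝ) (v : ℂ × HW n × ℂ) :
    Xmat n γ b v ∈ suppMod n 1 := by
  intro i j h
  have hj : (j : ℕ) < n + 2 := j.isLt
  unfold lev at h
  unfold Xmat
  split_ifs at h ⊢ <;> first
    | rfl
    | omega
    | (rw [pad]; rw [dif_neg (by omega)]; simp)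

/-- [𝔲,𝔲]: the real span of commutators of elements of 𝔲. -/
def Xc2 (n : ℕ) (γ : ℂ × HW n × ℂ →ₗ[ℝ] HW n) (b : ℂ × HW n × ℂ →ₗ[ℝ] ℝ) :
    Submodule ℝ (Matrix (Fin (n + 2)) (Fin (n + 2)) ℂ) :=
  Submodule.span ℝ {m | ∃ v v' : ℂ × HW n × ℂ,
    m = Xmat n γ b v * Xmat n γ b v' - Xmat n γ b v' * Xmat n γ b v}

/-- [𝔲,[𝔲,𝔲]]. -/
def Xc3 (n : ℕ) (γ : ℂ × HW n × ℂ →ₗ[ℝ] HW n) (b : ℂ × HW n × ℂ →ₗ[ℝ] ℝ) :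
    Submodule ℝ (Matrix (Fin (n + 2)) (Fin (n + 2)) ℂ) :=
  Submodule.span ℝ {m | ∃ v : ℂ × HW n × ℂ, ∃ w ∈ Xc2 n γ b,
    m = Xmat n γ b v * w - w * Xmat n γ b v}

/-- [𝔲,[𝔲,[𝔲,𝔲]]]. -/
def Xc4 (n : ℕ) (γ : ℂ × HW n × ℂ →ₗ[ℝ] HW n) (b : ℂ × HW n × ℂ →ₗ[ℝ] ℝ) :
    Submodule ℝ (Matrix (Fin (n + 2)) (Fin (n + 2)) ℂ) :=
  Submodule.span ℝ {m | ∃ v : ℂ × HW n × ℂ, ∃ w ∈ Xc3 n γ b,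
    m = Xmat n γ b v * w - w * Xmat n γ b v}


lemma Xmat_r_apply (n : ℕ) (γ : ℂ × HW n × ℂ →ₗ[ℝ] HW n) (b : ℂ × HW n × ℂ →ₗ[ℝ] ℝ)
    (hγ1 : ∀ r : ℂ, γ (r, 0, 0) = 0) (hb1 : ∀ r : ℂ, b (r, 0, 0) = 0)
    (r : ℂ) (i j : Fin (n + 2)) :
    Xmat n γ b (r, 0, 0) i j = if (i : ℕ) = 0 ∧ (j : ℕ) = n + 1 then r else 0 := by
  unfold Xmat
  simp only [hγ1, hb1, pad_zero]
  split_ifs <;> simp_all <;> omega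

lemma xc2_le (n : ℕ) (hn : 1 ≤ n) (γ : ℂ × HW n × ℂ →ₗ[ℝ] HW n)
    (b : ℂ × HW n × ℂ →ₗ[ℝ] ℝ) : Xc2 n γ b ≤ suppMod n 2 := by
  rw [Xc2, Submodule.span_le]
  rintro m ⟨v, v', rfl⟩
  exact sub_mem
    (suppMod_mul (Xmat_mem_suppMod n hn γ b v) (Xmat_mem_suppMod n hn γ b v'))
    (suppMod_mul (Xmat_mem_suppMod n hn γ b v') (Xmat_mem_suppMod n hn γ b v))

lemma xc3_le (n : ℕ) (hn : 1 ≤ n) (γ : ℂ × HW n × ℂ →ₗ[ℝ] HW n)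
    (b : ℂ × HW n × ℂ →ₗ[ℝ] ℝ) : Xc3 n γ b ≤ suppMod n 3 := by
  rw [Xc3, Submodule.span_le]
  rintro m ⟨v, w, hw, rfl⟩
  have hw2 : w ∈ suppMod n 2 := xc2_le n hn γ b hw
  exact sub_mem (suppMod_mul (Xmat_mem_suppMod n hn γ b v) hw2)
    (suppMod_mul hw2 (Xmat_mem_suppMod n hn γ b v))

/-- the Lie algebra 𝔲 is nilpotent of step at most 3:
[𝔲,[𝔲,𝔲]] ⊆ {X(r,0,0) : r ∈ ℂ} and [𝔲,[𝔲,[𝔲,𝔲]]] = 0. -/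
theorem lie_algebra_three_step_nilpotent (n : ℕ) (hn : 1 ≤ n)
    (γ : ℂ × HW n × ℂ →ₗ[ℝ] HW n) (b : ℂ × HW n × ℂ →ₗ[ℝ] ℝ)
    (hγ1 : ∀ r : ℂ, γ (r, 0, 0) = 0) (hb1 : ∀ r : ℂ, b (r, 0, 0) = 0)
    (hC1 : Cond1 n γ) (hC2 : Cond2 n γ) (hC3 : Cond3 n γ b) :
    ((Xc3 n γ b : Set (Matrix (Fin (n + 2)) (Fin (n + 2)) ℂ)) ⊆
        {m | ∃ r : ℂ, m = Xmat n γ b (r, 0, 0)}) ∧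
      Xc4 n γ b = ⊥ := by
  constructor
  · intro m hm
    have hm3 : ∀ i j : Fin (n + 2), lev n (j : ℕ) < lev n (i : ℕ) + 3 → m i j = 0 :=
      xc3_le n hn γ b hm
    refine ⟨m ⟨0, by omega⟩ ⟨n + 1, by omega⟩, ?_⟩
    ext i j
    rw [Xmat_r_apply n γ b hγ1 hb1]
    by_cases hij : (i : ℕ) = 0 ∧ (j : ℕ) = n + 1
    · obtain ⟨hi, hj⟩ := hij
      rw [if_pos ⟨hi, hj⟩]
      congr 1
      · exact Fin.ext (by simp [hi])
      · exact Fin.ext (by simp [hj])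
    · rw [if_neg hij]
      apply hm3
      by_cases hi : (i : ℕ) = 0
      · have hj : (j : ℕ) ≠ n + 1 := fun h => hij ⟨hi, h⟩
        have := lev_le_two n hj j.isLt
        rw [hi, lev_zero]
        omega
      · have := lev_pos n hi
        have := lev_le_three n (j : ℕ)
        omega
  · rw [eq_bot_iff]
    intro m hm
    have hm4 : m ∈ suppMod n 4 := by
      refine Submodule.span_le.2 ?_ hm
      rintro x ⟨v, w, hw, rfl⟩
      have hw3 : w ∈ suppMod n 3 := xc3_le n hn γ b hw
      exact sub_mem (suppMod_mul (Xmat_mem_suppMod n hn γ b v) hw3)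
        (suppMod_mul hw3 (Xmat_mem_suppMod n hn γ b v))
    have : m = 0 := by
      ext i j
      have := lev_le_three n (j : ℕ)
      simpa using hm4 i j (by omega)
    simp [this]
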